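/- Let G be a simple graph, u and t vertices, and π a u-t path in G. Let w be the neighbour of u appearing on π that is closest to t along π, and let π_{wt} be the suffix of π from w to t. Then the walk formed by the edge uw followed by π_{wt} contains an induced (chordless) u-t path in G that uses the edge uw; in particular, w lies on some chordless u-t path of G. -/

import Mathlib

open SimpleGraph

variable {V : Type*}

/-- `l` is a (simple) path in `G`, given as its list of vertices. -/
def IsPathL (G : SimpleGraph V) (l : List V) : Prop :=
  l.Chain' G.Adj ∧ l.Nodup

/-- `l` is an `s`-`t` path in `G`. -/
def IsStPathL (G : SimpleGraph V) (s t : V) (l : List V) : Prop :=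
  IsPathL G l ∧ l.head? = some s ∧ l.getLast? = some t

/-- No two non-consecutive vertices of `l` are adjacent in `G`. -/
def NoChord (G : SimpleGraph V) (l : List V) : Prop :=
  ∀ (i j : ℕ) (hi : i < l.length) (hj : j < l.length), i + 1 < j →
    ¬ G.Adj (l.get ⟨i, hi⟩) (l.get ⟨j, hj⟩)

/-- `l` is a chordless (induced) `s`-`t` path in `G`. -/
def IsChordlessStPathL (G : SimpleGraph V) (s t : V) (l : List V) : Prop :=
  IsStPathL G s t l ∧ NoChord G l

/-- Let `π` be a `u`-`t` path and `w = π[k]` the neighbour of `u` on `π` closest to `t`.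
Then there is a chordless `u`-`t` path of `G` starting with the edge `uw` whose vertices all
lie in `{u} ∪ π_{wt}`; in particular `w` lies on a chordless `u`-`t` path. -/
theorem stmt11 (G : SimpleGraph V) (u t : V) (l : List V)
    (hl : IsStPathL G u t l)
    (k : ℕ) (hk : k < l.length)
    (hadj : G.Adj u (l.get ⟨k, hk⟩))
    (hclosest : ∀ (j : ℕ) (hj : j < l.length), k < j → ¬ G.Adj u (l.get ⟨j, hj⟩)) :
    ∃ l' : List V, IsChordlessStPathL G u t l' ∧
      l'.head? = some u ∧ l'[1]? = some (l.get ⟨k, hk⟩) ∧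
      ∀ v ∈ l', v ∈ u :: l.drop k := by
  classical
  obtain ⟨⟨hchain, hnodup⟩, hhead, hlast⟩ := hl
  have hlne : l ≠ [] := by rintro rfl; simp at hhead
  obtain ⟨tl, rfl⟩ : ∃ tl, l = u :: tl := by
    cases l with
    | nil => simp at hhead
    | cons a tl =>
      simp only [List.head?_cons, Option.some.injEq] at hhead
      exact ⟨tl, by rw [hhead]⟩
  have hk0 : k ≠ 0 := by
    rintro rfl
    exact G.irrefl hadj
  have hdropne : (u :: tl).drop k ≠ [] := by
    intro h
    have := List.drop_eq_nil_iff.mp h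
    omega
  have hunmem : u ∉ (u :: tl).drop k := by
    obtain ⟨k', rfl⟩ := Nat.exists_eq_succ_of_ne_zero hk0
    intro hmem
    have : u ∈ tl := List.mem_of_mem_drop (by simpa using hmem)
    exact (List.nodup_cons.mp hnodup).1 this
  have hlast_drop : ((u :: tl).drop k).getLast? = some t := by
    rw [← List.take_append_drop k (u :: tl),
      List.getLast?_append_of_ne_nil _ hdropne] at hlast
    exact hlast
  have hhead_drop : ((u :: tl).drop k).head? = some ((u :: tl).get ⟨k, hk⟩) := by
    rw [List.head?_eq_getElem?, List.getElem?_drop, Nat.add_zero,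
      List.getElem?_eq_getElem hk]
    rfl
  have hP0 : IsStPathL G u t (u :: (u :: tl).drop k) := by
    refine ⟨⟨?_, ?_⟩, rfl, ?_⟩
    · rw [show List.Chain' G.Adj _ ↔ _ from List.isChain_cons]
      refine ⟨?_, hchain.drop k⟩
      intro y hy
      rw [hhead_drop] at hy
      simp only [Option.mem_def, Option.some.injEq] at hy
      subst hy
      exact hadj
    · exact List.nodup_cons.mpr ⟨hunmem, hnodup.sublist (List.drop_sublist k _)⟩
    · rw [show u :: (u :: tl).drop k = [u] ++ (u :: tl).drop k from rfl,
        List.getLast?_append_of_ne_nil _ hdropne]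
      exact hlast_drop
  have hex : ∃ n : ℕ, ∃ l' : List V, l'.length = n ∧ IsStPathL G u t l' ∧
      ∀ v ∈ l', v ∈ u :: (u :: tl).drop k :=
    ⟨_, u :: (u :: tl).drop k, rfl, hP0, fun v hv => hv⟩
  obtain ⟨l', hlen, hP, hsub⟩ := Nat.find_spec hex
  obtain ⟨⟨hchain', hnodup'⟩, hhead', hlast'⟩ := hP
  have hnochord : NoChord G l' := by
    intro i j hi hj hij hadj'
    set l'' : List V := l'.take (i + 1) ++ l'.drop j with hl''
    have htne : l'.take (i + 1) ≠ [] := by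
      intro h
      have hlth := congrArg List.length h
      rw [List.length_take] at hlth
      simp only [List.length_nil] at hlth
      omega
    have hdne : l'.drop j ≠ [] := by
      intro h
      have := List.drop_eq_nil_iff.mp h
      omega
    have hlen'' : l''.length < Nat.find hex := by
      rw [← hlen]
      rw [hl'']
      simp only [List.length_append, List.length_take, List.length_drop]
      omega
    have hchain'' : l''.Chain' G.Adj := by
      refine (hchain'.take _).append (hchain'.drop _) ?_
      intro x hx y hy
      have hxl : (l'.take (i + 1)).getLast? = some (l'.get ⟨i, hi⟩) := by
        rw [List.getLast?_eq_getElem?]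
        have hlt : (l'.take (i + 1)).length = i + 1 := by
          simp; omega
        rw [hlt]
        simp only [Nat.add_sub_cancel]
        rw [List.getElem?_take_of_lt (Nat.lt_succ_self i),
          List.getElem?_eq_getElem hi]
        rfl
      have hyh : (l'.drop j).head? = some (l'.get ⟨j, hj⟩) := by
        rw [List.head?_eq_getElem?, List.getElem?_drop, Nat.add_zero,
          List.getElem?_eq_getElem hj]
        rfl
      rw [hxl] at hx; rw [hyh] at hy
      simp only [Option.mem_def, Option.some.injEq] at hx hy
      subst hx; subst hy
      exact hadj'
    have hsubl : List.Sublist l'' l' := by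
      conv_rhs => rw [← List.take_append_drop (i + 1) l']
      refine List.Sublist.append_left ?_ _
      have heq : l'.drop j = (l'.drop (i + 1)).drop (j - (i + 1)) := by
        rw [List.drop_drop]
        congr 1
        omega
      rw [heq]
      exact List.drop_sublist _ _
    have hnodup'' : l''.Nodup := hnodup'.sublist hsubl
    have hhead'' : l''.head? = some u := by
      rw [hl'', List.head?_append_of_ne_nil _ htne, List.head?_eq_getElem?,
        List.getElem?_take_of_lt (by omega : 0 < i + 1), ← List.head?_eq_getElem?]
      exact hhead'
    have hlast'' : l''.getLast? = some t := by
      rw [hl'', List.getLast?_append_of_ne_nil _ hdne]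
      rw [← List.take_append_drop j l', List.getLast?_append_of_ne_nil _ hdne] at hlast'
      exact hlast'
    have hmem'' : ∀ v ∈ l'', v ∈ u :: (u :: tl).drop k := by
      intro v hv
      exact hsub v (hsubl.subset hv)
    exact Nat.find_min hex hlen''
      ⟨l'', rfl, ⟨⟨hchain'', hnodup''⟩, hhead'', hlast''⟩, hmem''⟩
  have htlne : tl ≠ [] := by
    rintro rfl
    simp at hk
    omega
  have hut : u ≠ t := by
    have ht_tl : t ∈ tl := by
      rw [show u :: tl = [u] ++ tl from rfl,
        List.getLast?_append_of_ne_nil _ htlne] at hlast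
      exact List.mem_of_mem_getLast? hlast
    intro h
    subst h
    exact (List.nodup_cons.mp hnodup).1 ht_tl
  match l', hlen, hhead', hlast', hchain', hnodup', hnochord, hsub with
  | [], _, hhead', _, _, _, _, _ => simp at hhead'
  | [x], _, hhead', hlast', _, _, _, _ =>
    simp only [List.head?_cons, Option.some.injEq] at hhead'
    simp only [List.getLast?_singleton, Option.some.injEq] at hlast'
    exact absurd (hhead'.symm.trans hlast') hut
  | x :: b :: rest, hlen, hhead', hlast', hchain', hnodup', hnochord, hsub =>
    simp only [List.head?_cons, Option.some.injEq] at hhead'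
    subst hhead'
    have hub : G.Adj x b := (List.isChain_cons_cons.mp hchain').1
    have hb : b = (x :: tl).get ⟨k, hk⟩ := by
      have hbmem : b ∈ x :: (x :: tl).drop k := hsub b (by simp)
      have hbne : b ≠ x := by
        intro h; subst h
        exact (List.nodup_cons.mp hnodup').1 (by simp)
      have hbdrop : b ∈ (x :: tl).drop k := by
        rcases List.mem_cons.mp hbmem with h | h
        · exact absurd h hbne
        · exact h
      obtain ⟨m, hm, hbm⟩ := List.mem_iff_getElem.mp hbdrop
      rw [List.getElem_drop] at hbm
      have hkm : k + m < (x :: tl).length := by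
        rw [List.length_drop] at hm; omega
      rcases Nat.eq_zero_or_pos m with h0 | hpos
      · subst h0
        rw [← hbm]
        rfl
      · exfalso
        refine hclosest (k + m) hkm (by omega) ?_
        have hbg : (x :: tl).get ⟨k + m, hkm⟩ = b := hbm
        rw [hbg]
        exact hub
    subst hb
    exact ⟨_, ⟨⟨⟨hchain', hnodup'⟩, rfl, hlast'⟩, hnochord⟩, rfl, by simp, hsub⟩
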